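/- Let k be a field and let C_* be a chain complex of finite-dimensional k-vector spaces C_0, C_1, ..., C_n with differentials ∂_j : C_j → C_{j-1} satisfying ∂_j ∘ ∂_{j+1} = 0, equipped with an ℝ-filtration by subcomplexes F_{s_1}C_* ⊆ F_{s_2}C_* ⊆ ... ⊆ F_{s_max}C_* = C_* indexed by real numbers s_1 < s_2 < ... < s_max. Then there exists a filtration-compatible basis of C_* that is in canonical form: each subspace F_s C_j is the span of a subset of the chosen basis of C_j, for every basis vector e of C_j either ∂_j e = 0 or ∂_j e is itself a basis vector of C_{j-1}, and distinct basis vectors with nonzero differential have distinct images. Equivalently, C_* decomposes, via a linear isomorphism preserving the filtration, into a direct sum of filtered complexes of two types: one-dimensional complexes with trivial differential ∂(e_i) = 0, and two-dimensional complexes with trivial homology, ∂(e_{i_2}) = e_{i_1}. -/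

import Mathlib

open Submodule Set

section Aux

variable {k V : Type*} [Field k] [AddCommGroup V] [Module k V]


variable {k V : Type*} [Field k] [AddCommGroup V] [Module k V]

lemma indep_union_of_span
    {u c : Set V} {G : Submodule k V}
    (hu : LinearIndependent k ((↑) : u → V))
    (hc : LinearIndependent k ((↑) : c → V))
    (hcG : c ⊆ G) (hspan : span k c = G)
    (hucG : u ∩ ↑G ⊆ c)
    (hcompat : span k u ⊓ G ≤ span k (u ∩ ↑G)) :
    LinearIndependent k ((↑) : ↥(u ∪ c) → V) := by
  have heq : u ∪ c = (u \ ↑G) ∪ c := by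
    ext y; constructor
    · rintro (hy | hy)
      · by_cases hyG : y ∈ G
        · exact Or.inr (hucG ⟨hy, hyG⟩)
        · exact Or.inl ⟨hy, hyG⟩
      · exact Or.inr hy
    · rintro (⟨hy, _⟩ | hy)
      · exact Or.inl hy
      · exact Or.inr hy
  rw [heq]
  refine (LinearIndepOn.mono (v := id) hu diff_subset).id_union hc ?_
  rw [disjoint_def]
  intro z hz1 hz2
  rw [hspan] at hz2
  have hz3 : z ∈ span k (u ∩ ↑G) :=
    hcompat ⟨span_mono (diff_subset.trans (subset_refl u)) hz1, hz2⟩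
  have hdisj : Disjoint (span k (u \ ↑G)) (span k (u ∩ ↑G)) := by
    have h1 : ((↑) : u → V) '' (((↑) : u → V) ⁻¹' (u \ ↑G)) = u \ ↑G := by
      rw [Subtype.image_preimage_coe]
      exact inter_eq_self_of_subset_right diff_subset
    have h2 : ((↑) : u → V) '' (((↑) : u → V) ⁻¹' (u ∩ ↑G)) = u ∩ ↑G := by
      rw [Subtype.image_preimage_coe]
      exact inter_eq_self_of_subset_right inter_subset_left
    have := hu.disjoint_span_image
      (s := ((↑) : u → V) ⁻¹' (u \ ↑G)) (t := ((↑) : u → V) ⁻¹' (u ∩ ↑G)) ?_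
    · rw [h1, h2] at this
      exact this
    · apply Disjoint.preimage
      exact (disjoint_sdiff_inter (s := u) (t := ↑G))
  exact (disjoint_def.1 hdisj) z hz1 hz3

/-- an element of an independent set is not in the span of the rest -/
lemma not_mem_span_diff {c : Set V} (hc : LinearIndependent k ((↑) : c → V))
    {y : V} (hy : y ∈ c) : y ∉ span k (c \ {y}) := by
  intro hmem
  have h1 : ((↑) : c → V) '' (((↑) : c → V) ⁻¹' (c \ {y})) = c \ {y} := by
    rw [Subtype.image_preimage_coe]
    exact inter_eq_self_of_subset_right diff_subset
  have := hc.notMem_span_image (x := ⟨y, hy⟩)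
    (s := ((↑) : c → V) ⁻¹' (c \ {y})) ?_
  · rw [h1] at this; exact this hmem
  · intro hmem'
    exact (mem_preimage.1 hmem').2 rfl


lemma adapted_basis_exists
    (m : ℕ) (G : Fin (m + 1) → Submodule k V)
    (hmono : Monotone G)
    (u : Set V) (hu : LinearIndependent k ((↑) : u → V))
    (huG : u ⊆ G (Fin.last m))
    (hcompat : ∀ i, span k u ⊓ G i ≤ span k (u ∩ ↑(G i))) :
    ∃ c : Set V, u ⊆ c ∧ c ⊆ ↑(G (Fin.last m)) ∧
      LinearIndependent k ((↑) : c → V) ∧ span k c = G (Fin.last m) ∧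
      ∀ i, G i = span k (c ∩ ↑(G i)) := by
  have claim : ∀ p : ℕ, ∀ hp : p < m + 1, ∃ c : Set V,
      LinearIndependent k ((↑) : ↥(u ∪ c) → V) ∧ c ⊆ ↑(G ⟨p, hp⟩) ∧
      span k c = G ⟨p, hp⟩ ∧ u ∩ ↑(G ⟨p, hp⟩) ⊆ c ∧
      ∀ i : Fin (m + 1), i.1 ≤ p → G i = span k (c ∩ ↑(G i)) := by
    intro p
    induction p with
    | zero =>
      intro hp
      obtain ⟨c, hct, hsc, hspc, hlic⟩ :=
        exists_linearIndepOn_id_extension (LinearIndepOn.mono (v := id) hu inter_subset_left)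
          (inter_subset_right (s := u) (t := ↑(G ⟨0, hp⟩)))
      have hspan : span k c = G ⟨0, hp⟩ := by
        apply le_antisymm (span_le.2 hct)
        intro x hx; exact hspc hx
      refine ⟨c, ?_, hct, hspan, hsc, ?_⟩
      · exact indep_union_of_span hu hlic hct hspan hsc (hcompat _)
      · intro i hi
        have : i = ⟨0, hp⟩ := Fin.ext (Nat.le_zero.1 hi)
        subst this
        rw [inter_eq_self_of_subset_left hct, hspan]
    | succ p ih =>
      intro hp
      have hp' : p < m + 1 := by omega
      obtain ⟨c, hlic, hct, hspan, hsc, hadapt⟩ := ih hp'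
      have hle : G ⟨p, hp'⟩ ≤ G ⟨p + 1, hp⟩ := hmono (by simp [Fin.le_def])
      have hsub : c ∪ (u ∩ ↑(G ⟨p + 1, hp⟩)) ⊆ ↑(G ⟨p + 1, hp⟩) := by
        rintro y (hy | ⟨_, hy⟩)
        · exact hle (hct hy)
        · exact hy
      have hind : LinearIndependent k ((↑) : ↥(c ∪ (u ∩ ↑(G ⟨p + 1, hp⟩))) → V) := by
        apply LinearIndepOn.mono (v := id) hlic
        rintro y (hy | ⟨hy, _⟩)
        · exact Or.inr hy
        · exact Or.inl hy
      obtain ⟨c', hct', hsc', hspc', hlic'⟩ :=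
        exists_linearIndepOn_id_extension hind hsub
      have hspan' : span k c' = G ⟨p + 1, hp⟩ := by
        apply le_antisymm (span_le.2 hct')
        intro x hx; exact hspc' hx
      have hcc' : c ⊆ c' := (subset_union_left).trans hsc'
      have huc' : u ∩ ↑(G ⟨p + 1, hp⟩) ⊆ c' := (subset_union_right).trans hsc'
      refine ⟨c', ?_, hct', hspan', huc', ?_⟩
      · exact indep_union_of_span hu hlic' hct' hspan' huc' (hcompat _)
      · intro i hi
        rcases Nat.lt_or_ge i.1 (p + 1) with h | h
        · have h1 := hadapt i (by omega)
          apply le_antisymm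
          · exact h1.trans_le (span_mono (inter_subset_inter_left _ hcc'))
          · exact span_le.2 inter_subset_right
        · have : i = ⟨p + 1, hp⟩ := Fin.ext (le_antisymm hi h)
          subst this
          rw [inter_eq_self_of_subset_left hct', hspan']
  obtain ⟨c, hlic, hct, hspan, hsc, hadapt⟩ := claim m (by omega)
  exact ⟨c, fun y hy => hsc ⟨hy, huG hy⟩, hct, LinearIndepOn.mono (v := id) hlic subset_union_right, hspan,
    fun i => hadapt i (by omega)⟩

end Aux

lemma main_lemma
    (k : Type*) [Field k]
    (C : ℤ → Type*) [∀ j, AddCommGroup (C j)] [∀ j, Module k (C j)]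
    [∀ j, FiniteDimensional k (C j)]
    (n : ℕ) (hbound : ∀ j : ℤ, (j < 0 ∨ (n : ℤ) < j) → ∀ x : C j, x = 0)
    (D : ∀ j : ℤ, C j →ₗ[k] C (j - 1))
    (hDD : ∀ (j : ℤ) (x : C j), D (j - 1) (D j x) = 0)
    (m : ℕ) (N : ℕ)
    (U : ∀ j : ℤ, Submodule k (C j))
    (hU : ∀ (l : ℤ) (x : C l), x ∈ U l → D l x ∈ U (l - 1))
    (F' : Fin (m + 1) → ∀ j : ℤ, Submodule k (C j))
    (hmono : ∀ i i' : Fin (m + 1), i ≤ i' → ∀ l, F' i l ≤ F' i' l)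
    (htop : ∀ l, F' (Fin.last m) l = U l)
    (hsub : ∀ (i : Fin (m + 1)) (l : ℤ), ∀ x ∈ F' i l, D l x ∈ F' i (l - 1))
    (hdim : ∑ l ∈ Finset.range (n + 1), Module.finrank k (U (l : ℤ)) ≤ N) :
    ∃ b : ∀ l : ℤ, Set (C l),
      (∀ l, LinearIndependent k ((↑) : b l → C l)) ∧
      (∀ l, span k (b l) = U l) ∧
      (∀ (i : Fin (m + 1)) (l : ℤ), F' i l = span k (b l ∩ ↑(F' i l))) ∧
      (∀ l, ∀ y ∈ b l, D l y = 0 ∨ D l y ∈ b (l - 1)) ∧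
      (∀ l, ∀ y ∈ b l, ∀ y' ∈ b l,
        D l y ≠ 0 → D l y' ≠ 0 → D l y = D l y' → y = y') := by
  classical
  induction N using Nat.strong_induction_on generalizing U F' with
  | _ N IH =>
  by_cases hzero : ∀ (l : ℤ), ∀ x ∈ U l, D l x = 0
  · -- Case A : zero differential, just pick adapted bases in every degree
    have h : ∀ l : ℤ, ∃ c : Set (C l), c ⊆ ↑(U l) ∧
        LinearIndependent k ((↑) : c → C l) ∧ span k c = U l ∧
        ∀ i, F' i l = span k (c ∩ ↑(F' i l)) := by
      intro l
      obtain ⟨c, _, hc1, hc2, hc3, hc4⟩ :=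
        adapted_basis_exists m (fun i => F' i l)
          (fun i i' hii' => hmono i i' hii' l) ∅
          (linearIndependent_empty k (C l)) (empty_subset _)
          (fun i => by simp)
      exact ⟨c, by rw [← htop l]; exact hc1, hc2, by rw [← htop l]; exact hc3, hc4⟩
    choose b hb1 hb2 hb3 hb4 using h
    refine ⟨b, hb2, hb3, fun i l => hb4 l i, ?_, ?_⟩
    · intro l y hy
      exact Or.inl (hzero l y (hb1 l hy))
    · intro l y hy y' _ hne _ _
      exact absurd (hzero l y (hb1 l hy)) hne
  · -- Case B : there is a nonzero differential somewhere
    push_neg at hzero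
    obtain ⟨j, x₀, hx₀U, hDx₀⟩ := hzero
    -- degree bounds
    have hx₀ne : x₀ ≠ 0 := by rintro rfl; exact hDx₀ (map_zero _)
    have hjlow : 0 ≤ j ∧ j ≤ (n : ℤ) := by
      by_contra hcon
      refine hx₀ne (hbound j ?_ x₀)
      omega
    have hj1 : 1 ≤ j ∧ j ≤ (n : ℤ) := by
      rcases hjlow with ⟨h0, hn⟩
      refine ⟨?_, hn⟩
      by_contra hcon
      have hj0 : j - 1 < 0 := by omega
      exact hDx₀ (hbound (j - 1) (Or.inl hj0) _)
    -- minimal filtration level with a nonzero differential in degree j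
    set P : ℕ → Prop := fun p => ∃ hp : p < m + 1, ∃ y ∈ F' ⟨p, hp⟩ j, D j y ≠ 0 with hP
    have hex : ∃ p, P p := ⟨m, by omega, x₀, by rw [show (⟨m, by omega⟩ : Fin (m+1)) = Fin.last m from rfl, htop j]; exact hx₀U, hDx₀⟩
    obtain ⟨haf, x, hxF, hDx⟩ := Nat.find_spec hex
    set af : ℕ := Nat.find hex with hafdef
    set a : Fin (m + 1) := ⟨af, haf⟩ with hadef
    have hamin : ∀ i : Fin (m + 1), i.1 < af → ∀ y ∈ F' i j, D j y = 0 := by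
      intro i hi y hyF
      by_contra hne
      exact Nat.find_min hex hi ⟨i.isLt, y, by rwa [Fin.eta], hne⟩
    have hxU : x ∈ U j := by
      rw [← htop j]; exact hmono a (Fin.last m) (Fin.le_last a) j hxF
    set w1 : C (j - 1) := D j x with hw1def
    have hw1ne : w1 ≠ 0 := hDx
    have hw1U : w1 ∈ U (j - 1) := hU j x hxU
    have hw1F : ∀ i, a ≤ i → w1 ∈ F' i (j - 1) :=
      fun i hi => hmono a i hi (j - 1) (hsub a j x hxF)
    -- adapted basis of U (j-1) through w1
    obtain ⟨c, hw1c, hcG, hlic, hspanc, hadaptc⟩ :=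
      adapted_basis_exists m (fun i => F' i (j - 1))
        (fun i i' hii' => hmono i i' hii' (j - 1)) {w1}
        (LinearIndepOn.singleton (v := id) hw1ne)
        (by
          show ({w1} : Set (C (j - 1))) ⊆ ↑(F' (Fin.last m) (j - 1))
          rw [htop (j - 1)]; exact singleton_subset_iff.2 hw1U)
        (by
          intro i z hz
          rw [Submodule.mem_inf] at hz
          obtain ⟨hz1, hz2⟩ := hz
          rw [Submodule.mem_span_singleton] at hz1
          obtain ⟨γ, rfl⟩ := hz1
          rcases eq_or_ne γ 0 with rfl | hγ
          · rw [zero_smul]; exact zero_mem _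
          · have hw1i : w1 ∈ F' i (j - 1) := by
              have := (F' i (j - 1)).smul_mem γ⁻¹ hz2
              rwa [inv_smul_smul₀ hγ] at this
            exact smul_mem _ γ (subset_span ⟨rfl, hw1i⟩))
    have hw1c' : w1 ∈ c := hw1c rfl
    have hcU : c ⊆ ↑(U (j - 1)) := by rw [← htop (j - 1)]; exact hcG
    have hspanc' : span k c = U (j - 1) := by rw [← htop (j - 1)]; exact hspanc
    set W' : Submodule k (C (j - 1)) := span k (c \ {w1}) with hW'def
    have hW'le : W' ≤ U (j - 1) := by
      rw [← hspanc']; exact span_mono diff_subset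
    have hw1W' : w1 ∉ W' := not_mem_span_diff hlic hw1c'
    have hcsplit : c = insert w1 (c \ {w1}) := by
      rw [insert_diff_singleton, insert_eq_self.2 hw1c']
    have hUdec : U (j - 1) = span k {w1} ⊔ W' := by
      rw [← hspanc', hcsplit, span_insert, hW'def]
    -- the adapted decomposition in degree j - 1
    have hGdec : ∀ i : Fin (m + 1), ∀ z ∈ F' i (j - 1),
        ∃ γ : k, z - γ • w1 ∈ W' ⊓ F' i (j - 1) ∧ (γ ≠ 0 → w1 ∈ F' i (j - 1)) := by
      intro i z hz
      have hsplit : c ∩ ↑(F' i (j - 1)) =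
          ({w1} ∩ ↑(F' i (j - 1))) ∪ ((c \ {w1}) ∩ ↑(F' i (j - 1))) := by
        rw [hcsplit]; ext y
        simp only [mem_inter_iff, mem_union, mem_insert_iff, mem_diff, mem_singleton_iff]
        tauto
      rw [hadaptc i, hsplit, span_union] at hz
      obtain ⟨zu, hzu, zv, hzv, hzsum⟩ := mem_sup.1 hz
      have hzv1 : zv ∈ W' ⊓ F' i (j - 1) := by
        constructor
        · exact span_mono inter_subset_left hzv
        · exact span_le.2 inter_subset_right hzv
      by_cases hw1i : w1 ∈ F' i (j - 1)
      · have : ({w1} ∩ ↑(F' i (j - 1)) : Set (C (j - 1))) = {w1} := by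
          rw [inter_eq_self_of_subset_left (singleton_subset_iff.2 hw1i)]
        rw [this, mem_span_singleton] at hzu
        obtain ⟨γ, rfl⟩ := hzu
        exact ⟨γ, by rw [← hzsum]; simpa using hzv1, fun _ => hw1i⟩
      · have : ({w1} ∩ ↑(F' i (j - 1)) : Set (C (j - 1))) = ∅ := by
          ext y
          simp only [mem_inter_iff, mem_singleton_iff, mem_empty_iff_false, iff_false, not_and]
          rintro rfl; exact hw1i
        rw [this, span_empty, mem_bot] at hzu
        refine ⟨0, ?_, fun h => absurd rfl h⟩
        rw [zero_smul, sub_zero, ← hzsum, hzu, zero_add]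
        exact hzv1
    have hdecU : ∀ z ∈ U (j - 1), ∃ γ : k, z - γ • w1 ∈ W' := by
      intro z hz
      obtain ⟨γ, hγ, _⟩ := hGdec (Fin.last m) z (by rwa [htop (j - 1)])
      exact ⟨γ, hγ.1⟩
    -- the complementary subcomplex U'
    set U' : ∀ l : ℤ, Submodule k (C l) :=
      Function.update (Function.update U j (U j ⊓ comap (D j) W')) (j - 1) W' with hU'def
    have hjne : (j : ℤ) ≠ j - 1 := by omega
    have hU'j : U' j = U j ⊓ comap (D j) W' := by
      rw [hU'def, Function.update_of_ne hjne, Function.update_self]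
    have hU'j1 : U' (j - 1) = W' := by rw [hU'def, Function.update_self]
    have hU'other : ∀ l : ℤ, l ≠ j → l ≠ j - 1 → U' l = U l := by
      intro l h1 h2
      rw [hU'def, Function.update_of_ne h2, Function.update_of_ne h1]
    have hU'le : ∀ l, U' l ≤ U l := by
      intro l
      by_cases h1 : l = j
      · subst h1; rw [hU'j]; exact inf_le_left
      · by_cases h2 : l = j - 1
        · subst h2; rw [hU'j1]; exact hW'le
        · rw [hU'other l h1 h2]
    -- cycles of U not in degree j-1 belong to U'
    have hcycle : ∀ l : ℤ, l ≠ j - 1 → ∀ y : C l, y ∈ U l → D l y = 0 → y ∈ U' l := by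
      intro l hne y hyU hDy
      by_cases h1 : l = j
      · subst l
        rw [hU'j]
        have hc : y ∈ comap (D j) W' := Submodule.mem_comap.2 (by rw [hDy]; exact zero_mem _)
        exact Submodule.mem_inf.2 ⟨hyU, hc⟩
      · rw [hU'other l h1 hne]; exact hyU
    have hU' : ∀ (l : ℤ), ∀ y ∈ U' l, D l y ∈ U' (l - 1) := by
      intro l y hy
      by_cases h1 : l = j
      · subst l
        rw [hU'j] at hy
        rw [hU'j1]
        exact hy.2
      · by_cases h2 : l = j - 1
        · subst h2
          rw [hU'other (j - 1 - 1) (by omega) (by omega)]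
          exact hU (j - 1) y (hU'le (j - 1) hy)
        · rw [hU'other l h1 h2] at hy
          exact hcycle (l - 1) (by omega) (D l y) (hU l y hy) (hDD l y)
    -- x itself is not in U', w1 is not in W'
    have hxU' : x ∉ U' j := by
      rw [hU'j]
      rintro ⟨-, hmem⟩
      exact hw1W' hmem
    -- the reduced filtration
    set F'' : Fin (m + 1) → ∀ l : ℤ, Submodule k (C l) := fun i l => F' i l ⊓ U' l with hF''def
    have hF'le : ∀ i l, F' i l ≤ U l := by
      intro i l; rw [← htop l]; exact hmono i (Fin.last m) (Fin.le_last i) l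
    -- dimension count
    have hdim2 : (∑ l ∈ Finset.range (n + 1), Module.finrank k (U' (l : ℤ))) + 2 ≤
        ∑ l ∈ Finset.range (n + 1), Module.finrank k (U (l : ℤ)) := by
      set j0 : ℕ := j.toNat with hj0
      have hmem1 : j0 ∈ Finset.range (n + 1) := by
        simp only [Finset.mem_range]; omega
      have hmem2 : j0 - 1 ∈ (Finset.range (n + 1)).erase j0 := by
        simp only [Finset.mem_erase, Finset.mem_range]; omega
      have e1 : ((j0 : ℕ) : ℤ) = j := by omega
      have e2 : ((j0 - 1 : ℕ) : ℤ) = j - 1 := by omega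
      have hsplit : ∀ A : (∀ l : ℤ, Submodule k (C l)),
          ∑ l ∈ Finset.range (n + 1), Module.finrank k (A (l : ℤ)) =
          Module.finrank k (A ((j0 : ℕ) : ℤ)) + (Module.finrank k (A (((j0 - 1 : ℕ)) : ℤ)) +
            ∑ l ∈ ((Finset.range (n + 1)).erase j0).erase (j0 - 1),
              Module.finrank k (A (l : ℤ))) := by
        intro A
        rw [← Finset.add_sum_erase _ (fun l : ℕ => Module.finrank k (A (l : ℤ))) hmem1,
            ← Finset.add_sum_erase _ (fun l : ℕ => Module.finrank k (A (l : ℤ))) hmem2]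
      have h1 : Module.finrank k (U' ((j0 : ℕ) : ℤ)) < Module.finrank k (U ((j0 : ℕ) : ℤ)) := by
        rw [e1]
        refine Submodule.finrank_lt_finrank_of_lt (lt_of_le_of_ne (hU'le j) ?_)
        intro h
        exact hxU' (by rw [h]; exact hxU)
      have h2 : Module.finrank k (U' (((j0 - 1 : ℕ)) : ℤ)) <
          Module.finrank k (U (((j0 - 1 : ℕ)) : ℤ)) := by
        rw [e2]
        refine Submodule.finrank_lt_finrank_of_lt (lt_of_le_of_ne (hU'le (j - 1)) ?_)
        intro h
        exact hw1W' (by rw [← hU'j1, h]; exact hw1U)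
      have h3 : ∑ l ∈ ((Finset.range (n + 1)).erase j0).erase (j0 - 1),
            Module.finrank k (U' (l : ℤ)) ≤
          ∑ l ∈ ((Finset.range (n + 1)).erase j0).erase (j0 - 1),
            Module.finrank k (U (l : ℤ)) :=
        Finset.sum_le_sum (fun l _ => Submodule.finrank_mono (hU'le (l : ℤ)))
      rw [hsplit U, hsplit U']
      omega
    -- apply the induction hypothesis
    obtain ⟨b', hb'1, hb'2, hb'3, hb'4, hb'5⟩ :=
      IH (∑ l ∈ Finset.range (n + 1), Module.finrank k (U' (l : ℤ))) (by omega)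
        U' hU' F''
        (fun i i' hii' l => inf_le_inf_right _ (hmono i i' hii' l))
        (fun l => by rw [hF''def]; simp only []; rw [htop l, inf_eq_right.2 (hU'le l)])
        (fun i l y hy => ⟨hsub i l y hy.1, hU' l y hy.2⟩)
        le_rfl
    have hb'U : ∀ l, b' l ⊆ ↑(U' l) := by
      intro l y hy
      rw [← hb'2 l]
      exact subset_span hy
    -- assemble the new spanning sets
    set b : ∀ l : ℤ, Set (C l) :=
      Function.update (Function.update b' j (insert x (b' j))) (j - 1) (insert w1 (b' (j - 1)))
      with hbdef
    have hbj : b j = insert x (b' j) := by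
      rw [hbdef, Function.update_of_ne hjne, Function.update_self]
    have hbj1 : b (j - 1) = insert w1 (b' (j - 1)) := by rw [hbdef, Function.update_self]
    have hbother : ∀ l : ℤ, l ≠ j → l ≠ j - 1 → b l = b' l := by
      intro l h1 h2
      rw [hbdef, Function.update_of_ne h2, Function.update_of_ne h1]
    have hb'b : ∀ l, b' l ⊆ b l := by
      intro l
      by_cases h1 : l = j
      · subst h1; rw [hbj]; exact subset_insert _ _
      · by_cases h2 : l = j - 1
        · subst h2; rw [hbj1]; exact subset_insert _ _
        · rw [hbother l h1 h2]
    -- b' j elements have differentials in W'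
    have hb'jW : ∀ y ∈ b' j, D j y ∈ W' := by
      intro y hy
      have := hb'U j hy
      rw [hU'j] at this
      exact this.2
    -- spans
    have hspanbj : span k (b j) = U j := by
      rw [hbj, span_insert]
      apply le_antisymm
      · refine sup_le ?_ ?_
        · rw [span_singleton_le_iff_mem]; exact hxU
        · rw [hb'2 j]; exact hU'le j
      · intro z hz
        obtain ⟨γ, hγ⟩ := hdecU (D j z) (hU j z hz)
        have hz' : z - γ • x ∈ U' j := by
          rw [hU'j]
          refine Submodule.mem_inf.2 ⟨sub_mem hz (smul_mem _ _ hxU), Submodule.mem_comap.2 ?_⟩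
          rw [map_sub, map_smul]
          exact hγ
        have hmem' : z - γ • x ∈ span k (b' j) := by rw [hb'2 j]; exact hz'
        have hzdec : z = γ • x + (z - γ • x) := by abel
        rw [hzdec]
        exact add_mem (mem_sup_left (smul_mem _ _ (mem_span_singleton_self x)))
          (mem_sup_right hmem')
    have hspanbj1 : span k (b (j - 1)) = U (j - 1) := by
      rw [hbj1, span_insert, hUdec]
      congr 1
      rw [hb'2 (j - 1), hU'j1]
    have hspanb : ∀ l, span k (b l) = U l := by
      intro l
      by_cases h1 : l = j
      · subst h1; exact hspanbj
      · by_cases h2 : l = j - 1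
        · subst h2; exact hspanbj1
        · rw [hbother l h1 h2, hb'2 l, hU'other l h1 h2]
    -- independence
    have hindep : ∀ l, LinearIndependent k ((↑) : b l → C l) := by
      intro l
      by_cases h1 : l = j
      · subst l
        rw [hbj]
        refine LinearIndepOn.id_insert (hb'1 j) ?_
        rw [hb'2 j]
        exact hxU'
      · by_cases h2 : l = j - 1
        · subst h2
          rw [hbj1]
          refine LinearIndepOn.id_insert (hb'1 (j - 1)) ?_
          rw [hb'2 (j - 1), hU'j1]
          exact hw1W'
        · rw [hbother l h1 h2]; exact hb'1 l
    -- differential condition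
    have hdiff : ∀ l, ∀ y ∈ b l, D l y = 0 ∨ D l y ∈ b (l - 1) := by
      intro l y hy
      by_cases h1 : l = j
      · subst l
        rw [hbj] at hy
        rcases hy with rfl | hy
        · right; rw [hbj1]; exact mem_insert _ _
        · rcases hb'4 j y hy with h | h
          · exact Or.inl h
          · exact Or.inr (hb'b (j - 1) h)
      · by_cases h2 : l = j - 1
        · subst h2
          rw [hbj1] at hy
          rcases hy with rfl | hy
          · left; rw [hw1def]; exact hDD j x
          · rcases hb'4 (j - 1) y hy with h | h
            · exact Or.inl h
            · exact Or.inr (hb'b (j - 1 - 1) h)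
        · rw [hbother l h1 h2] at hy
          rcases hb'4 l y hy with h | h
          · exact Or.inl h
          · exact Or.inr (hb'b (l - 1) h)
    -- injectivity condition
    have hinj : ∀ l, ∀ y ∈ b l, ∀ y' ∈ b l,
        D l y ≠ 0 → D l y' ≠ 0 → D l y = D l y' → y = y' := by
      intro l y hy y' hy' hne hne' heq
      by_cases h1 : l = j
      · subst l
        rw [hbj] at hy hy'
        rcases hy with hyx | hy
        · rcases hy' with hyx' | hy'
          · rw [hyx, hyx']
          · have hc : w1 ∈ W' := by
              rw [hw1def, ← hyx, heq]
              exact hb'jW y' hy'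
            exact absurd hc hw1W'
        · rcases hy' with hyx' | hy'
          · have hc : w1 ∈ W' := by
              rw [hw1def, ← hyx', ← heq]
              exact hb'jW y hy
            exact absurd hc hw1W'
          · exact hb'5 j y hy y' hy' hne hne' heq
      · by_cases h2 : l = j - 1
        · subst h2
          rw [hbj1] at hy hy'
          rcases hy with rfl | hy
          · exact absurd (hDD j x) hne
          · rcases hy' with rfl | hy'
            · exact absurd (hDD j x) hne'
            · exact hb'5 (j - 1) y hy y' hy' hne hne' heq
        · rw [hbother l h1 h2] at hy hy'
          exact hb'5 l y hy y' hy' hne hne' heq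
    -- adaptedness
    have hadapt : ∀ (i : Fin (m + 1)) (l : ℤ), F' i l = span k (b l ∩ ↑(F' i l)) := by
      intro i l
      have hb'F : ∀ l, b' l ∩ ↑(F'' i l) = b' l ∩ ↑(F' i l) := by
        intro l'
        ext y
        simp only [mem_inter_iff, hF''def, SetLike.mem_coe, Submodule.mem_inf]
        exact ⟨fun ⟨h1, h2, _⟩ => ⟨h1, h2⟩, fun ⟨h1, h2⟩ => ⟨h1, h2, hb'U l' h1⟩⟩
      apply le_antisymm ?_ (span_le.2 inter_subset_right)
      by_cases h1 : l = j
      · subst l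
        by_cases hia : i.1 < af
        · -- low filtration levels lie in U' j
          have hFU' : F' i j ≤ U' j := by
            intro z hz
            exact hcycle j (by omega) z (hF'le i j hz) (hamin i hia z hz)
          have hEq : F' i j = F'' i j := by
            rw [hF''def]
            exact (inf_eq_left.2 hFU').symm
          calc F' i j = span k (b' j ∩ ↑(F'' i j)) := hEq.trans (hb'3 i j)
            _ ≤ span k (b j ∩ ↑(F' i j)) := by
                refine span_mono ?_
                rw [hb'F j]
                exact inter_subset_inter (hb'b j) Subset.rfl
        · -- x is in this filtration level
          have hxi : x ∈ F' i j := hmono a i (by rw [hadef]; exact not_lt.1 hia) j hxF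
          intro z hz
          obtain ⟨γ, hγ1, _⟩ := hGdec i (D j z) (hsub i j z hz)
          have hz' : z - γ • x ∈ F'' i j := by
            refine Submodule.mem_inf.2 ⟨sub_mem hz (smul_mem _ _ hxi), ?_⟩
            rw [hU'j]
            refine Submodule.mem_inf.2
              ⟨sub_mem (hF'le i j hz) (smul_mem _ _ hxU), Submodule.mem_comap.2 ?_⟩
            rw [map_sub, map_smul]
            exact hγ1.1
          have hz'' : z - γ • x ∈ span k (b j ∩ ↑(F' i j)) := by
            rw [hb'3 i j] at hz'
            refine span_mono ?_ hz'
            rw [hb'F j]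
            exact inter_subset_inter (hb'b j) Subset.rfl
          have hxmem : x ∈ span k (b j ∩ ↑(F' i j)) := by
            refine subset_span ⟨?_, hxi⟩
            rw [hbj]; exact mem_insert _ _
          have hzdec : z = (z - γ • x) + γ • x := by abel
          rw [hzdec]
          exact add_mem hz'' (smul_mem _ _ hxmem)
      · by_cases h2 : l = j - 1
        · subst h2
          conv_lhs => rw [hadaptc i]
          refine span_le.2 ?_
          intro y hy
          obtain ⟨hyc, hyF⟩ := hy
          by_cases hyw : y = w1
          · subst hyw
            refine subset_span ⟨?_, hyF⟩
            rw [hbj1]; exact mem_insert _ _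
          · have hyW' : y ∈ W' := subset_span ⟨hyc, hyw⟩
            have hmem : y ∈ F'' i (j - 1) :=
              Submodule.mem_inf.2 ⟨hyF, by rw [hU'j1]; exact hyW'⟩
            rw [hb'3 i (j - 1)] at hmem
            refine span_mono ?_ hmem
            rw [hb'F (j - 1)]
            exact inter_subset_inter (hb'b (j - 1)) Subset.rfl
        · have hFU : F'' i l = F' i l := by
            rw [hF''def]
            simp only []
            rw [hU'other l h1 h2]
            exact inf_eq_left.2 (hF'le i l)
          conv_lhs => rw [← hFU, hb'3 i l]
          refine span_mono ?_
          rw [hb'F l]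
          exact inter_subset_inter (hb'b l) Subset.rfl
    exact ⟨b, hindep, hspanb, hadapt, hdiff, hinj⟩

/-- **Existence of the canonical form (barcode basis) of an ℝ-filtered chain complex.**
Let `C` be a chain complex of finite-dimensional vector spaces over a field `k`,
concentrated in degrees `0, 1, …, n`, with differentials `D j : C j → C (j-1)`
satisfying `D ∘ D = 0`, equipped with an increasing ℝ-filtration by subcomplexes
`F (s 0) C ⊆ … ⊆ F (s m) C = C` indexed by reals `s 0 < s 1 < … < s m`.
Then there exists a filtration-compatible basis of `C` in canonical form: each
filtration subspace is the span of a subset of the basis, the differential of each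
basis vector is either zero or again a basis vector, and distinct basis vectors with
nonzero differential have distinct images.  (Equivalently, `C` splits, by a linear
change of basis preserving the filtration, into one-dimensional filtered complexes
with trivial differential and two-dimensional filtered complexes with trivial
homology.) -/
theorem canonical_form_exists
    (k : Type*) [Field k]
    (C : ℤ → Type*) [∀ j, AddCommGroup (C j)] [∀ j, Module k (C j)]
    [∀ j, FiniteDimensional k (C j)]
    (n : ℕ) (hbound : ∀ j : ℤ, (j < 0 ∨ (n : ℤ) < j) → ∀ x : C j, x = 0)
    (D : ∀ j : ℤ, C j →ₗ[k] C (j - 1))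
    (hDD : ∀ (j : ℤ) (x : C j), D (j - 1) (D j x) = 0)
    (m : ℕ) (s : Fin (m + 1) → ℝ) (hs : StrictMono s)
    (F : Fin (m + 1) → ∀ j : ℤ, Submodule k (C j))
    (hFmono : ∀ i i' : Fin (m + 1), i ≤ i' → ∀ j : ℤ, F i j ≤ F i' j)
    (hFtop : ∀ j : ℤ, F (Fin.last m) j = ⊤)
    (hFsub : ∀ (i : Fin (m + 1)) (j : ℤ), ∀ x ∈ F i j, D j x ∈ F i (j - 1)) :
    ∃ B : ∀ j : ℤ, Module.Basis (Fin (Module.finrank k (C j))) k (C j),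
      (∀ (i : Fin (m + 1)) (j : ℤ), ∃ I : Set (Fin (Module.finrank k (C j))),
          F i j = Submodule.span k (⇑(B j) '' I)) ∧
      (∀ (j : ℤ) (e : Fin (Module.finrank k (C j))),
          D j (B j e) = 0 ∨
            ∃ e' : Fin (Module.finrank k (C (j - 1))), D j (B j e) = B (j - 1) e') ∧
      (∀ (j : ℤ) (e e' : Fin (Module.finrank k (C j))),
          D j (B j e) ≠ 0 → D j (B j e') ≠ 0 →
            D j (B j e) = D j (B j e') → e = e') := by
  classical
  obtain ⟨b, hb1, hb2, hb3, hb4, hb5⟩ :=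
    main_lemma k C n hbound D hDD m
      (∑ l ∈ Finset.range (n + 1), Module.finrank k ((⊤ : Submodule k (C (l : ℤ)))))
      (fun _ => ⊤) (fun l x _ => mem_top) F hFmono hFtop hFsub le_rfl
  have key : ∀ j : ℤ, ∃ B : Module.Basis (Fin (Module.finrank k (C j))) k (C j),
      Set.range ⇑B = b j := by
    intro j
    have hfin : (b j).Finite := (hb1 j).finite
    haveI := hfin.fintype
    have hsp : ⊤ ≤ span k (Set.range ((↑) : b j → C j)) := by
      rw [Subtype.range_coe, hb2 j]
    let basis : Module.Basis (b j) k (C j) := Module.Basis.mk (hb1 j) hsp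
    have hcard : Fintype.card (b j) = Module.finrank k (C j) :=
      (Module.finrank_eq_card_basis basis).symm
    refine ⟨basis.reindex (Fintype.equivFinOfCardEq hcard), ?_⟩
    rw [Module.Basis.range_reindex]
    show Set.range ⇑basis = b j
    rw [Module.Basis.coe_mk, Subtype.range_coe]
  choose B hB using key
  have hmem : ∀ (j : ℤ) (e : Fin (Module.finrank k (C j))), B j e ∈ b j := by
    intro j e
    rw [← hB j]
    exact mem_range_self e
  refine ⟨B, ?_, ?_, ?_⟩
  · intro i j
    refine ⟨(⇑(B j)) ⁻¹' (b j ∩ ↑(F i j)), ?_⟩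
    have himg : ⇑(B j) '' ((⇑(B j)) ⁻¹' (b j ∩ ↑(F i j))) = b j ∩ ↑(F i j) := by
      rw [image_preimage_eq_inter_range, hB j]
      exact inter_eq_self_of_subset_left inter_subset_left
    rw [himg]
    exact hb3 i j
  · intro j e
    rcases hb4 j (B j e) (hmem j e) with h | h
    · exact Or.inl h
    · rw [← hB (j - 1)] at h
      obtain ⟨e', he'⟩ := h
      exact Or.inr ⟨e', he'.symm⟩
  · intro j e e' hne hne' heq
    have := hb5 j (B j e) (hmem j e) (B j e') (hmem j e') hne hne' heq
    exact (B j).injective this
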